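/- Let G be a finite multigraph of even order in which every vertex has even, positive degree, and which is connected. Then G can be decomposed into two odd subgraphs. -/

import Mathlib

open Finset
open scoped Classical

/-- A multigraph on vertex type `V` with edge index type `E`: each edge `e` has two
distinct endpoints given as an unordered pair `ends e` (no loops, multiple edges allowed). -/
structure Multigraph (V : Type) (E : Type) where
  ends : E → Sym2 V
  no_loops : ∀ e, ¬ (ends e).IsDiag

namespace Multigraph

variable {V E : Type} [Fintype V] [Fintype E]

/-- The number of edges from the edge set `F` incident with `v`. -/
noncomputable def degIn (G : Multigraph V E) (F : Finset E) (v : V) : ℕ :=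
  (F.filter (fun e => v ∈ G.ends e)).card

/-- The degree of `v` in `G`. -/
noncomputable def deg (G : Multigraph V E) (v : V) : ℕ := G.degIn Finset.univ v

/-- The underlying simple graph of `G`. -/
def simple (G : Multigraph V E) : SimpleGraph V where
  Adj x y := x ≠ y ∧ ∃ e : E, G.ends e = s(x, y)
  symm := ⟨by
    rintro x y ⟨hxy, e, he⟩
    exact ⟨hxy.symm, e, by rw [he, Sym2.eq_swap]⟩⟩
  loopless := ⟨fun x h => h.1 rfl⟩

/-- `C` is the vertex set of a connected component of the subgraph of `G` induced by `S`. -/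
def IsComponentOf (G : Multigraph V E) (S : Set V) (C : Finset V) : Prop :=
  ∃ v ∈ S, ∀ x : V, x ∈ C ↔
    Relation.ReflTransGen (fun a b => a ∈ S ∧ b ∈ S ∧ (G.simple).Adj a b) v x

/-- The number of edges of `G` with one endpoint in `U₁` and the other in `U₂`. -/
noncomputable def eBetween (G : Multigraph V E) (U₁ U₂ : Finset V) : ℕ :=
  (Finset.univ.filter (fun e : E => ∃ x ∈ U₁, ∃ y ∈ U₂, G.ends e = s(x, y))).card

/-- The set of vertices of `G` of odd degree. -/
noncomputable def oddVerts (G : Multigraph V E) : Finset V :=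
  Finset.univ.filter (fun v => Odd (G.deg v))

/-- The set of vertices of `G` of even degree. -/
noncomputable def evenVerts (G : Multigraph V E) : Finset V :=
  Finset.univ.filter (fun v => Even (G.deg v))

/-- `F` forms an odd subgraph: every vertex incident with an edge of `F` has odd `F`-degree. -/
def IsOddSet (G : Multigraph V E) (F : Finset E) : Prop :=
  ∀ v : V, (∃ e ∈ F, v ∈ G.ends e) → Odd (G.degIn F v)

/-- `F` forms an even subgraph: every vertex has even `F`-degree. -/
def IsEvenSet (G : Multigraph V E) (F : Finset E) : Prop :=
  ∀ v : V, Even (G.degIn F v)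

end Multigraph

open Multigraph

lemma odd_iff_cast_two (n : ℕ) : Odd n ↔ (n : ZMod 2) = 1 := by
  rw [Nat.odd_iff]
  constructor
  · intro h
    calc (n : ZMod 2) = ((n % 2 : ℕ) : ZMod 2) := by rw [ZMod.natCast_mod]
    _ = 1 := by rw [h]; norm_num
  · intro h
    by_contra hne
    have h0 : n % 2 = 0 := by omega
    have h2 : (n : ZMod 2) = ((n % 2 : ℕ) : ZMod 2) := by rw [ZMod.natCast_mod]
    rw [h0] at h2
    simp at h2
    rw [h2] at h
    exact one_ne_zero h.symm

lemma zmod2_cases (x : ZMod 2) : x = 0 ∨ x = 1 := by revert x; decide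

theorem stmt15 {V E : Type} [Fintype V] [Fintype E] (G : Multigraph V E)
    (horder : Even (Nat.card V)) (hdeg : ∀ v : V, Even (G.deg v) ∧ 0 < G.deg v)
    (hconn : G.simple.Connected) :
    ∃ F : Finset E, (∀ v : V, Odd (G.degIn F v)) ∧ (∀ v : V, Odd (G.degIn Fᶜ v)) := by
  classical
  set bnd : (E → ZMod 2) → V → ZMod 2 :=
    fun f v => ∑ e : E, if v ∈ G.ends e then f e else 0 with hbnd
  obtain ⟨v₀⟩ := hconn.nonempty
  -- step 1: for each v, find f with boundary χ_{v₀} + χ_v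
  have reach : ∀ v : V, ∃ f : E → ZMod 2, ∀ w,
      bnd f w = (if w = v₀ then 1 else 0) + (if w = v then 1 else 0) := by
    intro v
    have h := hconn.preconnected v₀ v
    rw [SimpleGraph.reachable_iff_reflTransGen] at h
    induction h with
    | refl =>
      refine ⟨0, fun w => ?_⟩
      simp only [hbnd, Pi.zero_apply, ite_self, Finset.sum_const_zero]
      split_ifs <;> decide
    | @tail b c hbc hadj ih =>
      obtain ⟨f, hf⟩ := ih
      obtain ⟨hne, e, he⟩ := hadj
      refine ⟨f + (fun e' => if e' = e then 1 else 0), fun w => ?_⟩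
      have hsplit : bnd (f + fun e' => if e' = e then 1 else 0) w
          = bnd f w + (if w ∈ G.ends e then 1 else 0) := by
        simp only [hbnd, Pi.add_apply]
        rw [show (∑ x : E, if w ∈ G.ends x then f x + (if x = e then (1:ZMod 2) else 0) else 0)
            = ∑ x : E, ((if w ∈ G.ends x then f x else 0)
              + (if x = e then (if w ∈ G.ends x then (1:ZMod 2) else 0) else 0)) from
          Finset.sum_congr rfl (fun x _ => by split_ifs <;> simp_all)]
        rw [Finset.sum_add_distrib,
          Finset.sum_ite_eq' Finset.univ e (fun x => if w ∈ G.ends x then (1:ZMod 2) else 0)]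
        simp only [Finset.mem_univ, if_true]
      rw [hsplit, hf w, he]
      have hmem : (w ∈ (s(b,c) : Sym2 V)) ↔ (w = b ∨ w = c) := Sym2.mem_iff
      by_cases hb : w = b <;> by_cases hc : w = c <;>
        simp_all <;> split_ifs <;> first | rfl | decide | ring
  choose f hf using reach
  set g : E → ZMod 2 := ∑ v : V, f v with hg
  -- boundary of g is the all-ones function
  have hbndg : ∀ w, bnd g w = 1 := by
    intro w
    have hswap : bnd g w = ∑ v : V, bnd (f v) w := by
      simp only [hbnd, hg, Finset.sum_apply]
      rw [Finset.sum_comm (γ := V) (s := Finset.univ) (t := Finset.univ)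
        (f := fun v e => if w ∈ G.ends e then f v e else 0)]
      exact Finset.sum_congr rfl (fun e _ => by split_ifs <;> simp)
    rw [hswap]
    have : ∑ v : V, bnd (f v) w
        = ∑ v : V, ((if w = v₀ then (1:ZMod 2) else 0) + (if w = v then 1 else 0)) :=
      Finset.sum_congr rfl (fun v _ => hf v w)
    rw [this, Finset.sum_add_distrib, Finset.sum_const, Finset.sum_ite_eq Finset.univ w
      (fun _ => (1:ZMod 2))]
    simp only [Finset.mem_univ, if_true]
    have hcard : ((Fintype.card V : ℕ) : ZMod 2) = 0 := by
      obtain ⟨k, hk⟩ := horder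
      rw [Nat.card_eq_fintype_card] at hk
      rw [hk]; push_cast; ring_nf
      rw [show (2:ZMod 2) = 0 by decide, mul_zero]
    rw [nsmul_eq_mul, Finset.card_univ, hcard]
    ring
  set F : Finset E := Finset.univ.filter (fun e => g e = 1) with hF
  -- degIn F w cast equals bnd g w
  have hdegF : ∀ w, ((G.degIn F w : ℕ) : ZMod 2) = bnd g w := by
    intro w
    rw [Multigraph.degIn, Finset.card_eq_sum_ones, Nat.cast_sum]
    rw [Finset.sum_filter, hF, Finset.sum_filter]
    refine Finset.sum_congr rfl (fun e _ => ?_)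
    rcases zmod2_cases (g e) with h | h <;> split_ifs <;> simp_all
  have hoddF : ∀ w, Odd (G.degIn F w) := fun w => by
    rw [odd_iff_cast_two, hdegF, hbndg]
  refine ⟨F, hoddF, fun w => ?_⟩
  have hsum : G.degIn F w + G.degIn Fᶜ w = G.deg w := by
    rw [Multigraph.deg, Multigraph.degIn, Multigraph.degIn, Multigraph.degIn]
    rw [← Finset.card_union_of_disjoint (Finset.disjoint_filter_filter
      disjoint_compl_right)]
    rw [← Finset.filter_union, Finset.union_compl]
  have heven := (hdeg w).1
  have hodd := hoddF w
  rw [Nat.even_iff] at heven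
  rw [Nat.odd_iff] at hodd ⊢
  omega
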